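/- Let n = p_1 ⋯ p_l be a Cunningham product, let N = C_n be the cyclic group of order n, and let π be the set of primes dividing n. Then Hol(N) contains a unique Hall π-subgroup H, i.e., a unique subgroup whose order is a product of primes in π and whose index in Hol(N) is divisible by no prime in π; moreover this subgroup H is normal in Hol(N) and has order n · p_2 p_3 ⋯ p_l. -/

import Mathlib

def autMulEquiv (G : Type*) [AddGroup G] : MulAut (Multiplicative G) ≃* Multiplicative (AddAut G) :=
  MulAutMultiplicative G

def sdpEquivProd {N G : Type*} [Group N] [Group G] (φ : G →* MulAut N) :
    (N ⋊[φ] G) ≃ N × G where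
  toFun x := (x.left, x.right)
  invFun y := ⟨y.1, y.2⟩
  left_inv _ := rfl
  right_inv _ := rfl

lemma totient_prod_primes (s : Finset ℕ) (f : ℕ → ℕ)
    (hf : ∀ i ∈ s, (f i).Prime)
    (hinj : ∀ i ∈ s, ∀ j ∈ s, f i = f j → i = j) :
    Nat.totient (∏ i ∈ s, f i) = ∏ i ∈ s, (f i - 1) := by
  induction s using Finset.induction_on with
  | empty => simp
  | @insert a s ha ih =>
    rw [Finset.prod_insert ha, Finset.prod_insert ha,
      Nat.totient_mul, Nat.totient_prime (hf a (Finset.mem_insert_self a s)),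
      ih (fun i hi => hf i (Finset.mem_insert_of_mem hi))
        (fun i hi j hj h => hinj i (Finset.mem_insert_of_mem hi) j (Finset.mem_insert_of_mem hj) h)]
    · exact Nat.Coprime.prod_right fun i hi =>
        (Nat.coprime_primes (hf a (Finset.mem_insert_self a s))
          (hf i (Finset.mem_insert_of_mem hi))).mpr
          (fun h => ha (by rwa [hinj a (Finset.mem_insert_self a s) i
            (Finset.mem_insert_of_mem hi) h]))

/-- The holomorph `Hol(N) = N ⋊ Aut(N)` of a group `N`, with multiplication
`[η, α][μ, β] = [η α(μ), α β]`. -/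
abbrev Hol (N : Type*) [Group N] : Type _ :=
  N ⋊[MonoidHom.id (MulAut N)] MulAut N

/-- `H` is a Hall `π`-subgroup of `G`: its order is a product of primes in `π` and its
index is divisible by no prime in `π`. -/
def IsHallPiSubgroup {G : Type*} [Group G] (π : Set ℕ) (H : Subgroup G) : Prop :=
  (∀ q : ℕ, q.Prime → q ∣ Nat.card H → q ∈ π) ∧ ∀ q ∈ π, ¬ q ∣ H.index

/-- Let `n = p₁ ⋯ p_l` be a Cunningham product, `N = C_n` cyclic of order `n`, and `π`
the set of primes dividing `n`.  Then `Hol(N)` contains a unique Hall `π`-subgroup `H`;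
moreover this subgroup is normal in `Hol(N)` and has order `n · p₂ p₃ ⋯ p_l`. -/
theorem unique_hall_subgroup_of_holomorph_cyclic_cunningham
    (l : ℕ) (hl : 1 ≤ l) (p : ℕ → ℕ)
    (hprime : ∀ i, 1 ≤ i → i ≤ l → (p i).Prime)
    (hodd : ∀ i, 1 ≤ i → i ≤ l → Odd (p i))
    (hchain : ∀ i, 1 ≤ i → i < l → p i = 2 * p (i + 1) + 1)
    (n : ℕ) (hn : n = ∏ i ∈ Finset.Icc 1 l, p i) :
    (∃! H : Subgroup (Hol (Multiplicative (ZMod n))),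
        IsHallPiSubgroup {q : ℕ | q.Prime ∧ q ∣ n} H) ∧
      ∀ H : Subgroup (Hol (Multiplicative (ZMod n))),
        IsHallPiSubgroup {q : ℕ | q.Prime ∧ q ∣ n} H →
          H.Normal ∧ Nat.card H = n * ∏ i ∈ Finset.Icc 2 l, p i := by
  ------------------------------------------------------------------
  -- Numerical facts
  ------------------------------------------------------------------
  set m : ℕ := ∏ i ∈ Finset.Icc 2 l, p i with hm
  set b : ℕ := 2 ^ (l - 1) * (p l - 1) with hb
  have h3 : ∀ i, 1 ≤ i → i ≤ l → 3 ≤ p i := by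
    intro i h1 h2
    have h2le := (hprime i h1 h2).two_le
    obtain ⟨k, hk⟩ := hodd i h1 h2
    omega
  have hstep : ∀ i, 1 ≤ i → i < l → p (i + 1) < p i := by
    intro i h1 h2; rw [hchain i h1 h2]; omega
  have hle : ∀ j, 1 ≤ j → j ≤ l → ∀ i, 1 ≤ i → i ≤ j → p j ≤ p i := by
    intro j
    induction j with
    | zero => omega
    | succ k ih =>
      intro h1 h2 i hi1 hi2
      rcases Nat.eq_or_lt_of_le hi2 with h | h
      · subst h; exact le_rfl
      · have hk1 : 1 ≤ k := by omega
        have h5 := hstep k hk1 (by omega)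
        have h6 := ih hk1 (by omega) i hi1 (by omega)
        omega
  have hlt : ∀ i j, 1 ≤ i → i < j → j ≤ l → p j < p i := by
    intro i j h1 h2 h3'
    have h4 := hstep i h1 (by omega)
    have h5 := hle j (by omega) h3' (i + 1) (by omega) (by omega)
    omega
  have hn0 : 0 < n := by
    rw [hn]
    exact Finset.prod_pos fun i hi => by
      have := h3 i (Finset.mem_Icc.mp hi).1 (Finset.mem_Icc.mp hi).2; omega
  have hmdvd : m ∣ n := by
    rw [hn, hm]
    exact Finset.prod_dvd_prod_of_subset _ _ _ (Finset.Icc_subset_Icc (by omega) le_rfl)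
  have hqn : ∀ q : ℕ, q.Prime → q ∣ n → ∃ j, 1 ≤ j ∧ j ≤ l ∧ q = p j := by
    intro q hq hd
    rw [hn] at hd
    obtain ⟨j, hj, hdj⟩ := hq.prime.exists_mem_finset_dvd hd
    rw [Finset.mem_Icc] at hj
    exact ⟨j, hj.1, hj.2,
      (Nat.prime_dvd_prime_iff_eq hq (hprime j hj.1 hj.2)).mp hdj⟩
  have hqb : ∀ q : ℕ, q.Prime → q ∣ n → ¬ q ∣ b := by
    intro q hq hd hdb
    obtain ⟨j, hj1, hj2, rfl⟩ := hqn q hq hd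
    have hcop2 : (p j).Coprime (2 ^ (l - 1)) := by
      apply Nat.Coprime.pow_right
      rw [Nat.coprime_primes hq Nat.prime_two]
      have := h3 j hj1 hj2; omega
    have hdl : p j ∣ p l - 1 := hcop2.dvd_of_dvd_mul_left (hb ▸ hdb)
    have hll : 3 ≤ p l := h3 l hl le_rfl
    have h7 : p j ≤ p l - 1 := Nat.le_of_dvd (by omega) hdl
    have h8 : p l ≤ p j := hle l hl le_rfl j hj1 hj2
    omega
  have htot : Nat.totient n = m * b := by
    have hinj : ∀ i ∈ Finset.Icc 1 l, ∀ j ∈ Finset.Icc 1 l, p i = p j → i = j := by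
      intro i hi j hj h
      rw [Finset.mem_Icc] at hi hj
      by_contra hne
      rcases Nat.lt_or_ge i j with h' | h'
      · have := hlt i j hi.1 h' hj.2; omega
      · have := hlt j i hj.1 (by omega) hi.2; omega
    rw [hn, totient_prod_primes _ _ (fun i hi =>
        hprime i (Finset.mem_Icc.mp hi).1 (Finset.mem_Icc.mp hi).2) hinj]
    -- split off the last factor
    have hsplit : Finset.Icc 1 l = Finset.Icc 1 (l - 1 + 1) := by
      congr 1; omega
    have h1 : ∏ i ∈ Finset.Icc 1 l, (p i - 1)
        = (∏ i ∈ Finset.Icc 1 (l - 1), (p i - 1)) * (p (l - 1 + 1) - 1) := by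
      rw [hsplit, Finset.prod_Icc_succ_top (by omega)]
    have hl1 : l - 1 + 1 = l := by omega
    rw [h1, hl1]
    have h2 : ∏ i ∈ Finset.Icc 1 (l - 1), (p i - 1)
        = ∏ i ∈ Finset.Icc 1 (l - 1), (2 * p (i + 1)) := by
      apply Finset.prod_congr rfl
      intro i hi
      rw [Finset.mem_Icc] at hi
      rw [hchain i hi.1 (by omega)]
      omega
    have h4 : ∏ i ∈ Finset.Icc 1 (l - 1), p (i + 1) = m := by
      rw [hm]
      rw [show Finset.Icc 2 l = (Finset.Icc 1 (l - 1)).map (addRightEmbedding 1) by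
        rw [Finset.map_add_right_Icc]; congr 1; omega]
      rw [Finset.prod_map]
      rfl
    rw [h2, Finset.prod_mul_distrib, Finset.prod_const, Nat.card_Icc, h4, hb,
      show l - 1 + 1 - 1 = l - 1 from by omega]
    ring
  have hbpos : 0 < b := by
    have := h3 l hl le_rfl
    have : 0 < p l - 1 := by omega
    positivity
  have hmpos : 0 < m := by
    rw [hm]
    exact Finset.prod_pos fun i hi => by
      rw [Finset.mem_Icc] at hi
      have := h3 i (by omega) hi.2; omega
  ------------------------------------------------------------------
  -- Group theory setup
  ------------------------------------------------------------------
  haveI : NeZero n := ⟨hn0.ne'⟩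
  have hcardU : Nat.card (ZMod n)ˣ = m * b := by
    rw [Nat.card_eq_fintype_card, ZMod.card_units_eq_totient, htot]
  set ψ : (ZMod n)ˣ →* (ZMod n)ˣ := powMonoidHom b with hψ
  have hker_range : Nat.card ψ.ker * Nat.card ψ.range = m * b := by
    rw [← hcardU, ← Subgroup.card_mul_index ψ.ker, Subgroup.index_ker]
  -- every prime of |ker| divides b
  have hkdvd : Nat.card ψ.ker ∣ b := by
    have hkp : ∀ q : ℕ, q.Prime → q ∣ Nat.card ψ.ker → q ∣ b := by
      intro q hq hd
      haveI := Fact.mk hq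
      rw [Nat.card_eq_fintype_card] at hd
      obtain ⟨x, hx⟩ := exists_prime_orderOf_dvd_card q hd
      have hxb : (x : (ZMod n)ˣ) ^ b = 1 := x.2
      have : orderOf (x : (ZMod n)ˣ) ∣ b := orderOf_dvd_of_pow_eq_one hxb
      rwa [Subgroup.orderOf_coe, hx] at this
    have hcop : (Nat.card ψ.ker).Coprime m := by
      by_contra hnc
      obtain ⟨q, hqp, hq1, hq2⟩ := Nat.Prime.not_coprime_iff_dvd.mp hnc
      exact hqb q hqp (dvd_trans hq2 hmdvd) (hkp q hqp hq1)
    exact hcop.dvd_of_dvd_mul_left ⟨Nat.card ψ.range, hker_range.symm⟩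
  -- every prime of |range| divides m
  have hrdvd : Nat.card ψ.range ∣ m := by
    have hrp : ∀ q : ℕ, q.Prime → q ∣ Nat.card ψ.range → q ∣ m := by
      intro q hq hd
      haveI := Fact.mk hq
      rw [Nat.card_eq_fintype_card] at hd
      obtain ⟨y, hy⟩ := exists_prime_orderOf_dvd_card q hd
      obtain ⟨x, hxy⟩ := y.2
      have hym : (y : (ZMod n)ˣ) ^ m = 1 := by
        rw [← hxy]
        show (x ^ b) ^ m = 1
        rw [← pow_mul, mul_comm b m, ← hcardU, pow_card_eq_one']
      have : orderOf (y : (ZMod n)ˣ) ∣ m := orderOf_dvd_of_pow_eq_one hym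
      rwa [Subgroup.orderOf_coe, hy] at this
    have hcop : (Nat.card ψ.range).Coprime b := by
      by_contra hnc
      obtain ⟨q, hqp, hq1, hq2⟩ := Nat.Prime.not_coprime_iff_dvd.mp hnc
      have hqm : q ∣ m := hrp q hqp hq1
      exact hqb q hqp (dvd_trans hqm hmdvd) hq2
    have : Nat.card ψ.range ∣ b * m := ⟨Nat.card ψ.ker, by rw [mul_comm b m, ← hker_range]; ring⟩
    exact hcop.dvd_of_dvd_mul_left this
  -- |range ψ| = m
  have hrange : Nat.card ψ.range = m := by
    obtain ⟨c, hc⟩ := hkdvd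
    have hk0 : 0 < Nat.card ψ.ker := Nat.card_pos
    have h5 : Nat.card ψ.ker * (m * c) = Nat.card ψ.ker * Nat.card ψ.range := by
      rw [hker_range, hc]; ring
    have h6 : m * c = Nat.card ψ.range := Nat.eq_of_mul_eq_mul_left hk0 h5
    have h7 : m * c ∣ m := h6 ▸ hrdvd
    have hr0 : 0 < Nat.card ψ.range := Nat.card_pos
    have hc0 : c ≠ 0 := by rintro rfl; rw [mul_zero] at h6; omega
    have hle' : m * c ≤ m * 1 := by simpa using Nat.le_of_dvd hmpos h7
    have hc1 : c = 1 := by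
      have := Nat.le_of_mul_le_mul_left hle' hmpos
      omega
    rw [← h6, hc1, mul_one]
  -- transfer to the automorphism group
  set e : MulAut (Multiplicative (ZMod n)) ≃* (ZMod n)ˣ :=
    (autMulEquiv (ZMod n)).trans (ZMod.AddAutEquivUnits n).toMultiplicative with he
  set P' : Subgroup (MulAut (Multiplicative (ZMod n))) := ψ.range.comap e.toMonoidHom with hP'
  have hP'card : Nat.card P' = m := by
    rw [← hrange]
    exact Nat.card_congr (e.toEquiv.subtypeEquiv fun x => Iff.rfl)
  have hP'index : P'.index = b := by
    have := Subgroup.index_comap_of_surjective ψ.range (f := e.toMonoidHom) e.surjective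
    rw [hP', this]
    have h5 := Subgroup.card_mul_index ψ.range
    rw [hrange, hcardU] at h5
    exact Nat.eq_of_mul_eq_mul_left hmpos h5
  have hP'normal : P'.Normal := (Subgroup.normal_of_comm ψ.range).comap _
  -- the Hall subgroup
  set H : Subgroup (Hol (Multiplicative (ZMod n))) :=
    P'.comap SemidirectProduct.rightHom with hH
  haveI hHnormal : H.Normal := hP'normal.comap _
  have hHindex : H.index = b := by
    rw [hH, Subgroup.index_comap_of_surjective _ SemidirectProduct.rightHom_surjective, hP'index]
  haveI hfinHol : Finite (Hol (Multiplicative (ZMod n))) :=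
    Finite.of_equiv _ (sdpEquivProd _).symm
  have hcardHol : Nat.card (Hol (Multiplicative (ZMod n))) = n * (m * b) := by
    calc Nat.card (Hol (Multiplicative (ZMod n)))
        = Nat.card (Multiplicative (ZMod n) × MulAut (Multiplicative (ZMod n))) :=
          Nat.card_congr (sdpEquivProd _)
      _ = n * (m * b) := by
          rw [Nat.card_prod, Nat.card_congr Multiplicative.toAdd, Nat.card_zmod,
            ← hcardU, Nat.card_congr e.toEquiv]
  have hHcard : Nat.card H = n * m := by
    have h5 := Subgroup.card_mul_index H
    rw [hHindex, hcardHol] at h5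
    have : Nat.card H * b = n * m * b := by rw [h5]; ring
    exact Nat.eq_of_mul_eq_mul_right hbpos this
  -- Hall property of H
  have hHall : IsHallPiSubgroup {q : ℕ | q.Prime ∧ q ∣ n} H := by
    constructor
    · intro q hq hd
      rw [hHcard] at hd
      refine ⟨hq, ?_⟩
      rcases (Nat.Prime.dvd_mul hq).mp hd with h | h
      · exact h
      · exact dvd_trans h hmdvd
    · rintro q ⟨hq, hqn'⟩
      rw [hHindex]
      exact hqb q hq hqn'
  -- uniqueness
  have huniq : ∀ K : Subgroup (Hol (Multiplicative (ZMod n))),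
      IsHallPiSubgroup {q : ℕ | q.Prime ∧ q ∣ n} K → K = H := by
    intro K hK
    have hKle : K ≤ H := by
      intro k hk
      have h1 : orderOf k ∣ Nat.card K := by
        have := orderOf_dvd_natCard (⟨k, hk⟩ : K)
        rwa [← Subgroup.orderOf_coe] at this
      have h2 : orderOf ((k : Hol (Multiplicative (ZMod n)) ⧸ H)) ∣ b := by
        rw [← hHindex, Subgroup.index_eq_card]
        exact orderOf_dvd_natCard _
      by_contra hnot
      rw [← QuotientGroup.eq_one_iff (N := H)] at hnot
      have hd1 : orderOf ((k : Hol (Multiplicative (ZMod n)) ⧸ H)) ≠ 1 := by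
        simpa [orderOf_eq_one_iff] using hnot
      set d := orderOf ((k : Hol (Multiplicative (ZMod n)) ⧸ H)) with hd
      have hq0 : d.minFac.Prime := Nat.minFac_prime hd1
      have hq0d : d.minFac ∣ d := Nat.minFac_dvd d
      have hq0K : d.minFac ∣ Nat.card K := by
        have h3 : d ∣ orderOf k := orderOf_map_dvd (QuotientGroup.mk' H) k
        exact dvd_trans (dvd_trans hq0d h3) h1
      have hq0π := hK.1 d.minFac hq0 hq0K
      exact hqb d.minFac hq0 hq0π.2 (dvd_trans hq0d h2)
    obtain ⟨c, hc⟩ := Subgroup.index_dvd_of_le hKle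
    have hHi0 : H.index ≠ 0 := by rw [hHindex]; omega
    have hcards : Nat.card K * c * H.index = Nat.card H * H.index := by
      have t1 := Subgroup.card_mul_index K
      have t2 := Subgroup.card_mul_index H
      rw [hc] at t1
      calc Nat.card K * c * H.index = Nat.card K * (H.index * c) := by ring
        _ = Nat.card H * H.index := by rw [t1, ← t2]
    have hKc : Nat.card K * c = Nat.card H :=
      Nat.eq_of_mul_eq_mul_right (Nat.pos_of_ne_zero hHi0) hcards
    have hc1 : c = 1 := by
      by_contra hc1
      have hc0 : c ≠ 0 := by
        rintro rfl
        rw [mul_zero] at hKc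
        have := hHcard ▸ hKc.symm
        nlinarith [hn0, hmpos]
      have hq0 : c.minFac.Prime := Nat.minFac_prime hc1
      have hq0H : c.minFac ∣ Nat.card H := by
        rw [← hKc]; exact (Nat.minFac_dvd c).mul_left (Nat.card K)
      have hq0n : c.minFac ∣ n := by
        rw [hHcard] at hq0H
        rcases (Nat.Prime.dvd_mul hq0).mp hq0H with h | h
        · exact h
        · exact dvd_trans h hmdvd
      have hdKi : c.minFac ∣ K.index := by
        rw [hc]; exact (Nat.minFac_dvd c).mul_left H.index
      exact hK.2 c.minFac ⟨hq0, hq0n⟩ hdKi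
    have hcard_eq : Nat.card K = Nat.card H := by rw [← hKc, hc1, mul_one]
    exact Subgroup.eq_of_le_of_card_ge hKle hcard_eq.ge
  refine ⟨⟨H, hHall, huniq⟩, ?_⟩
  intro K hK
  rw [huniq K hK]
  exact ⟨hHnormal, hHcard⟩
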